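/- There is an absolute constant C such that for every r ∈ ℓ²(ℤ) and every N ≥ 1, Σ_{n>N} Σ_{k≠n} (n+k)²/(n²(n-k)²) · |r(n+k)|² ≤ C·(‖r‖²/N + E_N(r)²). -/

import Mathlib

open scoped ENNReal

noncomputable def l2norm2 (r : ℤ → ℝ) : ℝ≥0∞ := ∑' k : ℤ, ENNReal.ofReal ((r k) ^ 2)

noncomputable def tailNorm2 (r : ℤ → ℝ) (N : ℕ) : ℝ≥0∞ :=
  ∑' k : {k : ℤ // (N : ℤ) ≤ |k|}, ENNReal.ofReal ((r k.1) ^ 2)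


lemma real_partial (M : ℕ) (hM : 1 ≤ M) (K : ℕ) :
    ∑ i ∈ Finset.range K, (1/((M:ℝ)+i)^2) ≤ 2/(M:ℝ) - 2/((M:ℝ)+K) := by
  induction K with
  | zero => simp
  | succ K ih =>
    rw [Finset.sum_range_succ]
    have hM' : (1:ℝ) ≤ M := by exact_mod_cast hM
    have h1 : (0:ℝ) < M + K := by positivity
    have h2 : (0:ℝ) < M + (K+1) := by positivity
    have key : 1/((M:ℝ)+K)^2 ≤ 2/((M:ℝ)+K) - 2/((M:ℝ)+(K+1)) := by
      rw [div_sub_div _ _ (ne_of_gt h1) (ne_of_gt h2), div_le_div_iff₀ (by positivity) (by positivity)]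
      ring_nf
      nlinarith
    push_cast
    push_cast at ih key
    linarith

lemma base (M : ℕ) (hM : 1 ≤ M) :
    ∑' i : ℕ, ENNReal.ofReal (1/((M:ℝ)+i)^2) ≤ ENNReal.ofReal (2/(M:ℝ)) := by
  rw [ENNReal.tsum_eq_iSup_sum]
  apply iSup_le
  intro s
  rw [← ENNReal.ofReal_sum_of_nonneg (by intro i _; positivity)]
  apply ENNReal.ofReal_le_ofReal
  obtain ⟨K, hK⟩ : ∃ K, s ⊆ Finset.range K := ⟨(s.sup id) + 1, fun x hx =>
    Finset.mem_range.mpr (Nat.lt_succ_of_le (Finset.le_sup (f := id) hx))⟩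
  calc ∑ i ∈ s, (1/((M:ℝ)+i)^2) ≤ ∑ i ∈ Finset.range K, (1/((M:ℝ)+i)^2) := by
        apply Finset.sum_le_sum_of_subset_of_nonneg hK
        intro i _ _; positivity
    _ ≤ 2/(M:ℝ) - 2/((M:ℝ)+K) := real_partial M hM K
    _ ≤ 2/(M:ℝ) := by
        have : (0:ℝ) ≤ 2/((M:ℝ)+K) := by positivity
        linarith


def posTail (N : ℕ) : ℕ ≃ {n : ℤ // (N:ℤ) < n} where
  toFun := fun i => ⟨(N:ℤ)+1+i, by omega⟩
  invFun := fun n => (n.1 - N - 1).toNat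
  left_inv := fun i => by simp; omega
  right_inv := fun n => by
    ext
    have := n.2
    simp
    omega

lemma S1 (N : ℕ) (hN : 1 ≤ N) :
    ∑' n : {n : ℤ // (N:ℤ) < n}, ENNReal.ofReal (1/(n.1:ℝ)^2) ≤ ENNReal.ofReal (2/(N:ℝ)) := by
  rw [← (posTail N).tsum_eq]
  have heq : ∀ i : ℕ, ENNReal.ofReal (1/((((posTail N) i).1 : ℤ):ℝ)^2)
      = ENNReal.ofReal (1/(((N+1:ℕ):ℝ)+i)^2) := by
    intro i
    have hv : ((((posTail N) i).1 : ℤ):ℝ) = ((N+1:ℕ):ℝ)+i := by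
      show (((N:ℤ)+1+i : ℤ):ℝ) = _
      push_cast; ring
    rw [hv]
  calc ∑' i : ℕ, ENNReal.ofReal (1/((((posTail N) i).1 : ℤ):ℝ)^2)
      = ∑' i : ℕ, ENNReal.ofReal (1/(((N+1:ℕ):ℝ)+i)^2) := tsum_congr heq
    _ ≤ ENNReal.ofReal (2/((N+1:ℕ):ℝ)) := base (N+1) (by omega)
    _ ≤ ENNReal.ofReal (2/(N:ℝ)) := by
        apply ENNReal.ofReal_le_ofReal
        have h1 : (0:ℝ) < N := by exact_mod_cast hN
        apply div_le_div_of_nonneg_left (by norm_num) h1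
        push_cast; linarith

lemma S2 : ∑' j : {j : ℤ // j ≠ 0}, ENNReal.ofReal (1/(j.1:ℝ)^2) ≤ ENNReal.ofReal 32 := by
  set φ : {j : ℤ // j ≠ 0} → ℕ :=
    fun j => if 0 < j.1 then 2*j.1.toNat - 1 else 2*(-j.1).toNat with hφdef
  have hinj : Function.Injective φ := by
    intro a b h
    simp only [hφdef] at h
    ext
    have ha := a.2; have hb := b.2
    split_ifs at h <;> omega
  have hpt : ∀ j : {j : ℤ // j ≠ 0}, ENNReal.ofReal (1/(j.1:ℝ)^2)
      ≤ (fun m : ℕ => ENNReal.ofReal (16/((1:ℝ)+m)^2)) (φ j) := by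
    intro j
    apply ENNReal.ofReal_le_ofReal
    simp only [hφdef]
    have hj := j.2
    rcases lt_or_gt_of_ne (show (j.1:ℤ) ≠ 0 from hj) with h | h
    · rw [if_neg (by omega)]
      have h1 : ((2*(-j.1).toNat : ℕ) : ℤ) = -2*j.1 := by omega
      have h2 : ((2*(-j.1).toNat : ℕ) : ℝ) = -2*(j.1:ℝ) := by exact_mod_cast h1
      rw [h2]
      have h3' : j.1 ≤ -1 := by omega
      have h3 : (j.1:ℝ) ≤ -1 := by exact_mod_cast h3'
      rw [div_le_div_iff₀ (by positivity) (by nlinarith)]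
      nlinarith
    · rw [if_pos h]
      have h1 : ((2*j.1.toNat - 1 : ℕ) : ℤ) = 2*j.1 - 1 := by omega
      have h2 : ((2*j.1.toNat - 1 : ℕ) : ℝ) = 2*(j.1:ℝ) - 1 := by exact_mod_cast h1
      rw [h2]
      have h3 : (1:ℝ) ≤ (j.1:ℝ) := by exact_mod_cast h
      rw [div_le_div_iff₀ (by positivity) (by nlinarith)]
      nlinarith
  calc ∑' j : {j : ℤ // j ≠ 0}, ENNReal.ofReal (1/(j.1:ℝ)^2)
      ≤ ∑' j, (fun m : ℕ => ENNReal.ofReal (16/((1:ℝ)+m)^2)) (φ j) := ENNReal.tsum_le_tsum hpt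
    _ ≤ ∑' m : ℕ, ENNReal.ofReal (16/((1:ℝ)+m)^2) := ENNReal.tsum_comp_le_tsum_of_injective hinj _
    _ = ENNReal.ofReal 16 * ∑' m : ℕ, ENNReal.ofReal (1/((1:ℝ)+m)^2) := by
        rw [← ENNReal.tsum_mul_left]
        refine tsum_congr fun m => ?_
        rw [← ENNReal.ofReal_mul (by norm_num)]
        congr 1; ring
    _ ≤ ENNReal.ofReal 16 * ENNReal.ofReal (2/((1:ℕ):ℝ)) := by
        gcongr
        have := base 1 le_rfl
        simpa using this
    _ ≤ ENNReal.ofReal 32 := by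
        rw [← ENNReal.ofReal_mul (by norm_num)]
        norm_num


noncomputable def tfun (r : ℤ → ℝ) (N : ℕ) : ℤ → ℝ≥0∞ :=
  fun m => if (N:ℤ) < m then ENNReal.ofReal ((r m)^2) else 0

lemma tfun_sum_le (r : ℤ → ℝ) (N : ℕ) : ∑' m : ℤ, tfun r N m ≤ tailNorm2 r N := by
  have h := tsum_subtype {k : ℤ | (N:ℤ) ≤ |k|} (fun m => ENNReal.ofReal ((r m)^2))
  have h2 : tailNorm2 r N
      = ∑' m : ℤ, Set.indicator {k : ℤ | (N:ℤ) ≤ |k|} (fun m => ENNReal.ofReal ((r m)^2)) m := by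
    rw [tailNorm2]; exact h
  rw [h2]
  apply ENNReal.tsum_le_tsum
  intro m
  rw [tfun, Set.indicator_apply]
  by_cases hm : (N:ℤ) < m
  · rw [if_pos hm, if_pos (show m ∈ {k : ℤ | (N:ℤ) ≤ |k|} by
      simp only [Set.mem_setOf_eq]
      exact le_trans (by omega) (le_abs_self m))]
  · simp only [if_neg hm]; exact zero_le

lemma inj_le_l2 {ι : Type} (r : ℤ → ℝ) {φ : ι → ℤ} (hφ : Function.Injective φ) :
    ∑' i, ENNReal.ofReal ((r (φ i))^2) ≤ l2norm2 r :=
  ENNReal.tsum_comp_le_tsum_of_injective hφ (fun m => ENNReal.ofReal ((r m)^2))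

lemma inj_le_t {ι : Type} (r : ℤ → ℝ) (N : ℕ) {φ : ι → ℤ} (hφ : Function.Injective φ) :
    ∑' i, tfun r N (φ i) ≤ tailNorm2 r N :=
  (ENNReal.tsum_comp_le_tsum_of_injective hφ (tfun r N)).trans (tfun_sum_le r N)

def reindex (n : ℤ) : {j : ℤ // j ≠ 0} ≃ {k : ℤ // k ≠ n} where
  toFun := fun j => ⟨n - j.1, by have := j.2; omega⟩
  invFun := fun k => ⟨n - k.1, by have := k.2; omega⟩
  left_inv := fun j => by ext; simp
  right_inv := fun k => by ext; simp

/-- There is an absolute constant `C` such that for every `r ∈ ℓ²(ℤ)` and every `N ≥ 1`,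
`Σ_{n>N} Σ_{k≠n} (n+k)²/(n²(n-k)²) |r(n+k)|² ≤ C (‖r‖²/N + E_N(r)²)`. -/
theorem stmt4 : ∃ C : ℝ, 0 < C ∧ ∀ r : ℤ → ℝ, Summable (fun k => (r k) ^ 2) →
    ∀ N : ℕ, 1 ≤ N →
    ∑' n : {n : ℤ // (N : ℤ) < n}, ∑' k : {k : ℤ // k ≠ n.1},
      ENNReal.ofReal (((n.1 : ℝ) + (k.1 : ℝ)) ^ 2 /
        ((n.1 : ℝ) ^ 2 * ((n.1 : ℝ) - (k.1 : ℝ)) ^ 2) * (r (n.1 + k.1)) ^ 2)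
    ≤ ENNReal.ofReal C * (l2norm2 r / (N : ℝ≥0∞) + tailNorm2 r N) := by
  refine ⟨256, by norm_num, fun r hr N hN => ?_⟩
  -- pointwise bound
  have key : ∀ (n : {n : ℤ // (N:ℤ) < n}) (k : {k : ℤ // k ≠ n.1}),
      ENNReal.ofReal (((n.1 : ℝ) + (k.1 : ℝ)) ^ 2 /
        ((n.1 : ℝ) ^ 2 * ((n.1 : ℝ) - (k.1 : ℝ)) ^ 2) * (r (n.1 + k.1)) ^ 2)
      ≤ ENNReal.ofReal (8/((n.1:ℝ)-(k.1:ℝ))^2) * tfun r N (n.1+k.1)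
        + ENNReal.ofReal (10/(n.1:ℝ)^2 * (r (n.1+k.1))^2) := by
    intro n k
    set a : ℝ := (n.1:ℝ) with ha
    set b : ℝ := (k.1:ℝ) with hb
    set x : ℝ := r (n.1+k.1) with hx
    have hn : (0:ℤ) < n.1 := by have := n.2; omega
    have hnR : (0:ℝ) < a := by rw [ha]; exact_mod_cast hn
    have hx2 : (0:ℝ) ≤ x^2 := sq_nonneg x
    have hA : (0:ℝ) < a^2 := pow_pos hnR 2
    have hne : a - b ≠ 0 := by
      have hzz : (n.1:ℤ) ≠ k.1 := fun h => k.2 h.symm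
      have hzr : (n.1:ℝ) ≠ (k.1:ℝ) := by exact_mod_cast hzz
      rw [ha, hb, sub_ne_zero]
      exact hzr
    have hB : (0:ℝ) < (a-b)^2 := by rw [← sq_abs]; exact pow_pos (abs_pos.mpr hne) 2
    have coeff : (a+b)^2 / (a^2*(a-b)^2) ≤ 8/(a-b)^2 + 2/a^2 := by
      rw [div_add_div _ _ (ne_of_gt hB) (ne_of_gt hA),
        div_le_div_iff₀ (by positivity) (by positivity)]
      nlinarith [mul_nonneg (sq_nonneg (3*a-b)) (le_of_lt (mul_pos hB hA)), sq_nonneg (3*a-b)]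
    by_cases hc : (N:ℤ) < n.1 + k.1
    · have ht : tfun r N (n.1+k.1) = ENNReal.ofReal (x^2) := by
        simp only [tfun, if_pos hc, hx]
      calc ENNReal.ofReal ((a+b)^2/(a^2*(a-b)^2) * x^2)
          ≤ ENNReal.ofReal ((8/(a-b)^2)*x^2 + (2/a^2)*x^2) := by
            apply ENNReal.ofReal_le_ofReal
            have h1 := mul_le_mul_of_nonneg_right coeff hx2
            rw [add_mul] at h1
            exact h1
        _ ≤ ENNReal.ofReal ((8/(a-b)^2)*x^2) + ENNReal.ofReal ((2/a^2)*x^2) :=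
            ENNReal.ofReal_add_le
        _ = ENNReal.ofReal (8/(a-b)^2) * tfun r N (n.1+k.1)
            + ENNReal.ofReal ((2/a^2)*x^2) := by
            rw [ht, ← ENNReal.ofReal_mul (by positivity)]
        _ ≤ ENNReal.ofReal (8/(a-b)^2) * tfun r N (n.1+k.1)
            + ENNReal.ofReal (10/a^2 * x^2) := by
            refine add_le_add_right (ENNReal.ofReal_le_ofReal ?_) _
            have h9 : (0:ℝ) ≤ x^2/a^2 := by positivity
            calc (2/a^2)*x^2 = 2*(x^2/a^2) := by ring
              _ ≤ 10*(x^2/a^2) := by linarith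
              _ = 10/a^2*x^2 := by ring
    · have ht : tfun r N (n.1+k.1) = 0 := by simp only [tfun, if_neg hc]
      have hk0 : k.1 ≤ 0 := by have := n.2; omega
      have hbR : b ≤ 0 := by rw [hb]; exact_mod_cast hk0
      have hsq : a^2 ≤ (a-b)^2 := by nlinarith
      have h2 : 8/(a-b)^2 ≤ 8/a^2 := by
        apply div_le_div_of_nonneg_left (by norm_num) hA hsq
      calc ENNReal.ofReal ((a+b)^2/(a^2*(a-b)^2) * x^2)
          ≤ ENNReal.ofReal (10/a^2 * x^2) := by
            apply ENNReal.ofReal_le_ofReal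
            apply mul_le_mul_of_nonneg_right _ hx2
            calc (a+b)^2/(a^2*(a-b)^2) ≤ 8/(a-b)^2 + 2/a^2 := coeff
              _ ≤ 8/a^2 + 2/a^2 := by linarith
              _ = 10/a^2 := by ring
        _ ≤ ENNReal.ofReal (8/(a-b)^2) * tfun r N (n.1+k.1)
            + ENNReal.ofReal (10/a^2 * x^2) := le_add_self
  -- bound for the second (l2) part
  have inner2 : ∀ n : {n : ℤ // (N:ℤ) < n},
      (∑' k : {k : ℤ // k ≠ n.1}, ENNReal.ofReal (10/(n.1:ℝ)^2 * (r (n.1+k.1))^2))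
      ≤ ENNReal.ofReal (10/(n.1:ℝ)^2) * l2norm2 r := by
    intro n
    have hsplit : ∀ k : {k : ℤ // k ≠ n.1},
        ENNReal.ofReal (10/(n.1:ℝ)^2 * (r (n.1+k.1))^2)
        = ENNReal.ofReal (10/(n.1:ℝ)^2) * ENNReal.ofReal ((r (n.1+k.1))^2) :=
      fun k => ENNReal.ofReal_mul (by positivity)
    rw [tsum_congr hsplit, ENNReal.tsum_mul_left]
    gcongr
    exact inj_le_l2 r (φ := fun k : {k : ℤ // k ≠ n.1} => n.1 + k.1)
      (fun x y h => Subtype.ext (by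
        have h' : n.1 + x.1 = n.1 + y.1 := h
        omega))
  have hB1 : (∑' n : {n : ℤ // (N:ℤ) < n}, ∑' k : {k : ℤ // k ≠ n.1},
      ENNReal.ofReal (10/(n.1:ℝ)^2 * (r (n.1+k.1))^2))
      ≤ ENNReal.ofReal 20 * (l2norm2 r / (N : ℝ≥0∞)) := by
    calc (∑' n : {n : ℤ // (N:ℤ) < n}, ∑' k : {k : ℤ // k ≠ n.1},
        ENNReal.ofReal (10/(n.1:ℝ)^2 * (r (n.1+k.1))^2))
        ≤ ∑' n : {n : ℤ // (N:ℤ) < n}, ENNReal.ofReal (10/(n.1:ℝ)^2) * l2norm2 r :=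
          ENNReal.tsum_le_tsum inner2
      _ = (∑' n : {n : ℤ // (N:ℤ) < n}, ENNReal.ofReal (10/(n.1:ℝ)^2)) * l2norm2 r :=
          ENNReal.tsum_mul_right
      _ = (ENNReal.ofReal 10 * ∑' n : {n : ℤ // (N:ℤ) < n}, ENNReal.ofReal (1/(n.1:ℝ)^2))
            * l2norm2 r := by
          rw [← ENNReal.tsum_mul_left]
          congr 1
          refine tsum_congr fun n => ?_
          rw [← ENNReal.ofReal_mul (by norm_num), mul_one_div]
      _ ≤ (ENNReal.ofReal 10 * ENNReal.ofReal (2/(N:ℝ))) * l2norm2 r := by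
          gcongr
          exact S1 N hN
      _ = ENNReal.ofReal 20 * (l2norm2 r / (N : ℝ≥0∞)) := by
          have hNR : (0:ℝ) < (N:ℝ) := by exact_mod_cast hN
          rw [← ENNReal.ofReal_mul (by norm_num)]
          have : (10:ℝ) * (2/(N:ℝ)) = 20 / (N:ℝ) := by ring
          rw [this, ENNReal.ofReal_div_of_pos hNR, ENNReal.ofReal_natCast]
          rw [div_eq_mul_inv, div_eq_mul_inv]
          ring
  -- bound for the first (tail) part
  have reidx : ∀ n : {n : ℤ // (N:ℤ) < n},
      (∑' k : {k : ℤ // k ≠ n.1},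
        ENNReal.ofReal (8/((n.1:ℝ)-(k.1:ℝ))^2) * tfun r N (n.1+k.1))
      = ∑' j : {j : ℤ // j ≠ 0},
        ENNReal.ofReal (8/(j.1:ℝ)^2) * tfun r N (2*n.1-j.1) := by
    intro n
    rw [← (reindex n.1).tsum_eq]
    refine tsum_congr fun j => ?_
    have h1 : ((n.1:ℝ) - (((reindex n.1) j).1 : ℝ))^2 = (j.1:ℝ)^2 := by
      show ((n.1:ℝ) - ((n.1 - j.1 : ℤ):ℝ))^2 = _
      push_cast
      ring
    have h2 : n.1 + ((reindex n.1) j).1 = 2*n.1 - j.1 := by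
      show n.1 + (n.1 - j.1) = _
      ring
    rw [h1, h2]
  have hA1 : (∑' n : {n : ℤ // (N:ℤ) < n}, ∑' k : {k : ℤ // k ≠ n.1},
      ENNReal.ofReal (8/((n.1:ℝ)-(k.1:ℝ))^2) * tfun r N (n.1+k.1))
      ≤ ENNReal.ofReal 256 * tailNorm2 r N := by
    calc (∑' n : {n : ℤ // (N:ℤ) < n}, ∑' k : {k : ℤ // k ≠ n.1},
        ENNReal.ofReal (8/((n.1:ℝ)-(k.1:ℝ))^2) * tfun r N (n.1+k.1))
        = ∑' n : {n : ℤ // (N:ℤ) < n}, ∑' j : {j : ℤ // j ≠ 0},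
            ENNReal.ofReal (8/(j.1:ℝ)^2) * tfun r N (2*n.1-j.1) := tsum_congr reidx
      _ = ∑' j : {j : ℤ // j ≠ 0}, ∑' n : {n : ℤ // (N:ℤ) < n},
            ENNReal.ofReal (8/(j.1:ℝ)^2) * tfun r N (2*n.1-j.1) := ENNReal.tsum_comm
      _ = ∑' j : {j : ℤ // j ≠ 0}, ENNReal.ofReal (8/(j.1:ℝ)^2)
            * ∑' n : {n : ℤ // (N:ℤ) < n}, tfun r N (2*n.1-j.1) :=
          tsum_congr fun j => ENNReal.tsum_mul_left
      _ ≤ ∑' j : {j : ℤ // j ≠ 0}, ENNReal.ofReal (8/(j.1:ℝ)^2) * tailNorm2 r N := by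
          gcongr with j
          exact inj_le_t r N (φ := fun n : {n : ℤ // (N:ℤ) < n} => 2*n.1 - j.1)
            (fun x y h => Subtype.ext (by
              have h' : 2*x.1 - j.1 = 2*y.1 - j.1 := h
              omega))
      _ = (∑' j : {j : ℤ // j ≠ 0}, ENNReal.ofReal (8/(j.1:ℝ)^2)) * tailNorm2 r N :=
          ENNReal.tsum_mul_right
      _ = (ENNReal.ofReal 8 * ∑' j : {j : ℤ // j ≠ 0}, ENNReal.ofReal (1/(j.1:ℝ)^2))
            * tailNorm2 r N := by
          rw [← ENNReal.tsum_mul_left]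
          congr 1
          refine tsum_congr fun j => ?_
          rw [← ENNReal.ofReal_mul (by norm_num), mul_one_div]
      _ ≤ (ENNReal.ofReal 8 * ENNReal.ofReal 32) * tailNorm2 r N := by
          gcongr
          exact S2
      _ = ENNReal.ofReal 256 * tailNorm2 r N := by
          rw [← ENNReal.ofReal_mul (by norm_num)]
          norm_num
  -- combine
  calc (∑' n : {n : ℤ // (N : ℤ) < n}, ∑' k : {k : ℤ // k ≠ n.1},
      ENNReal.ofReal (((n.1 : ℝ) + (k.1 : ℝ)) ^ 2 /
        ((n.1 : ℝ) ^ 2 * ((n.1 : ℝ) - (k.1 : ℝ)) ^ 2) * (r (n.1 + k.1)) ^ 2))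
      ≤ ∑' n : {n : ℤ // (N:ℤ) < n}, ∑' k : {k : ℤ // k ≠ n.1},
          (ENNReal.ofReal (8/((n.1:ℝ)-(k.1:ℝ))^2) * tfun r N (n.1+k.1)
           + ENNReal.ofReal (10/(n.1:ℝ)^2 * (r (n.1+k.1))^2)) :=
        ENNReal.tsum_le_tsum fun n => ENNReal.tsum_le_tsum (key n)
    _ = (∑' n : {n : ℤ // (N:ℤ) < n}, ∑' k : {k : ℤ // k ≠ n.1},
          ENNReal.ofReal (8/((n.1:ℝ)-(k.1:ℝ))^2) * tfun r N (n.1+k.1))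
        + (∑' n : {n : ℤ // (N:ℤ) < n}, ∑' k : {k : ℤ // k ≠ n.1},
          ENNReal.ofReal (10/(n.1:ℝ)^2 * (r (n.1+k.1))^2)) := by
        rw [← ENNReal.tsum_add]
        exact tsum_congr fun n => ENNReal.tsum_add
    _ ≤ ENNReal.ofReal 256 * tailNorm2 r N + ENNReal.ofReal 20 * (l2norm2 r / (N : ℝ≥0∞)) :=
        add_le_add hA1 hB1
    _ ≤ ENNReal.ofReal 256 * tailNorm2 r N
          + ENNReal.ofReal 256 * (l2norm2 r / (N : ℝ≥0∞)) :=
        add_le_add_right (mul_le_mul_left (ENNReal.ofReal_le_ofReal (by norm_num)) _) _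
    _ = ENNReal.ofReal 256 * (l2norm2 r / (N : ℝ≥0∞) + tailNorm2 r N) := by
        rw [← mul_add, add_comm (tailNorm2 r N)]
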